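/- Let G and H be controllable simple graphs on n vertices with real adjacency matrices A and B and walk matrices W_G and W_H. Suppose G and H are walk-equivalent (𝟙ᵀAʳ𝟙 = 𝟙ᵀBʳ𝟙 for all r ≥ 0) and there exists a permutation matrix P with PW_G = W_H. Then PAPᵀ = B; in particular G and H are isomorphic. -/
import Mathlib


open Matrix

/-- The walk matrix of a graph with adjacency matrix `A` on `n` vertices. -/
noncomputable def walkMatrix {n : ℕ} (A : Matrix (Fin n) (Fin n) ℝ) :
    Matrix (Fin n) (Fin n) ℝ :=
  Matrix.of fun i j => ((A ^ (j : ℕ)) *ᵥ (1 : Fin n → ℝ)) i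

lemma mul_walkMatrix_apply {n : ℕ} (A M : Matrix (Fin n) (Fin n) ℝ) (i j : Fin n) :
    (M * walkMatrix A) i j = (M *ᵥ ((A ^ (j : ℕ)) *ᵥ (1 : Fin n → ℝ))) i := by
  simp [Matrix.mul_apply, Matrix.mulVec, dotProduct, walkMatrix]

lemma walkMatrix_mulVec {n : ℕ} (A : Matrix (Fin n) (Fin n) ℝ) (c : Fin n → ℝ) :
    walkMatrix A *ᵥ c = ∑ j : Fin n, c j • ((A ^ (j : ℕ)) *ᵥ (1 : Fin n → ℝ)) := by
  funext i
  simp [Matrix.mulVec, dotProduct, walkMatrix, Finset.sum_apply, mul_comm]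

lemma dot_mulVec_sum {n : ℕ} (M : Matrix (Fin n) (Fin n) ℝ) (c : Fin n → ℝ)
    (f : Fin n → (Fin n → ℝ)) :
    (1 : Fin n → ℝ) ⬝ᵥ (M *ᵥ (∑ j, c j • f j)) =
      ∑ j, c j * ((1 : Fin n → ℝ) ⬝ᵥ (M *ᵥ f j)) := by
  have h1 : M *ᵥ (∑ j, c j • f j) = ∑ j, c j • (M *ᵥ f j) := by
    have := map_sum (Matrix.mulVecLin M) (fun j => c j • f j) Finset.univ
    simp only [Matrix.mulVecLin_apply, Matrix.mulVec_smul] at this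
    simpa using this
  rw [h1]
  have h2 : (1 : Fin n → ℝ) ⬝ᵥ (∑ j, c j • (M *ᵥ f j)) =
      ∑ j, (1 : Fin n → ℝ) ⬝ᵥ (c j • (M *ᵥ f j)) := by
    simp only [dotProduct, Finset.sum_apply, Finset.mul_sum]
    rw [Finset.sum_comm]
  rw [h2]
  congr 1
  funext j
  rw [dotProduct_smul]
  simp [smul_eq_mul]

/-- If two controllable graphs are walk-equivalent and a permutation matrix maps
one walk matrix onto the other, then the graphs are isomorphic via that permutation. -/
theorem controllable_walkEquiv_perm_isomorphic {n : ℕ}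
    (G H : SimpleGraph (Fin n)) [DecidableRel G.Adj] [DecidableRel H.Adj]
    (hG : IsUnit (walkMatrix (G.adjMatrix ℝ)))
    (hH : IsUnit (walkMatrix (H.adjMatrix ℝ)))
    (hwalk : ∀ r : ℕ, (1 : Fin n → ℝ) ⬝ᵥ (((G.adjMatrix ℝ) ^ r) *ᵥ (1 : Fin n → ℝ)) =
        (1 : Fin n → ℝ) ⬝ᵥ (((H.adjMatrix ℝ) ^ r) *ᵥ (1 : Fin n → ℝ)))
    (P : Matrix (Fin n) (Fin n) ℝ)
    (hP : ∃ σ : Equiv.Perm (Fin n), P = σ.permMatrix ℝ)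
    (hPW : P * walkMatrix (G.adjMatrix ℝ) = walkMatrix (H.adjMatrix ℝ)) :
    P * G.adjMatrix ℝ * Pᵀ = H.adjMatrix ℝ ∧ Nonempty (G ≃g H) := by
  obtain ⟨σ, rfl⟩ := hP
  set A := G.adjMatrix ℝ with hA
  set B := H.adjMatrix ℝ with hB
  set P := σ.permMatrix ℝ with hPdef
  have hGdet : IsUnit (walkMatrix A).det :=
    (Matrix.isUnit_iff_isUnit_det _).mp hG
  -- columns of hPW
  have h1 : ∀ j : Fin n, P *ᵥ ((A ^ (j : ℕ)) *ᵥ 1) = (B ^ (j : ℕ)) *ᵥ 1 := by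
    intro j
    funext i
    have := congrFun (congrFun hPW i) j
    rw [mul_walkMatrix_apply] at this
    rw [this]
    rfl
  -- the coefficient vector expressing A^n 1 in the column basis of W
  set c : Fin n → ℝ := (walkMatrix A)⁻¹ *ᵥ ((A ^ n) *ᵥ 1) with hc
  have hWc : walkMatrix A *ᵥ c = (A ^ n) *ᵥ 1 := by
    rw [hc, Matrix.mulVec_mulVec, Matrix.mul_nonsing_inv _ hGdet, Matrix.one_mulVec]
  have hAn : (A ^ n) *ᵥ (1 : Fin n → ℝ) = ∑ j : Fin n, c j • ((A ^ (j : ℕ)) *ᵥ 1) := by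
    rw [← hWc, walkMatrix_mulVec]
  have hBsymm : ∀ r : ℕ, (B ^ r)ᵀ = B ^ r := by
    intro r; rw [Matrix.transpose_pow, hB, SimpleGraph.transpose_adjMatrix]
  -- walk recursion for A
  have hArec : ∀ r : ℕ, (1 : Fin n → ℝ) ⬝ᵥ ((A ^ (r + n)) *ᵥ 1) =
      ∑ j : Fin n, c j * ((1 : Fin n → ℝ) ⬝ᵥ ((A ^ (r + (j : ℕ))) *ᵥ 1)) := by
    intro r
    have e : (A ^ (r + n)) *ᵥ (1 : Fin n → ℝ) = (A ^ r) *ᵥ ((A ^ n) *ᵥ 1) := by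
      rw [Matrix.mulVec_mulVec, ← pow_add]
    rw [e, hAn, dot_mulVec_sum]
    congr 1
    funext j
    rw [Matrix.mulVec_mulVec, ← pow_add]
  -- B^n 1 = V c
  have hBn : (B ^ n) *ᵥ (1 : Fin n → ℝ) = walkMatrix B *ᵥ c := by
    set v : Fin n → ℝ := (B ^ n) *ᵥ 1 - walkMatrix B *ᵥ c with hv
    have hVt : (walkMatrix B)ᵀ *ᵥ v = 0 := by
      funext r
      have hcol : ((walkMatrix B)ᵀ *ᵥ v) r = ((B ^ (r : ℕ)) *ᵥ 1) ⬝ᵥ v := by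
        simp [Matrix.mulVec, dotProduct, Matrix.transpose_apply, walkMatrix]
      have hsym : ((B ^ (r : ℕ)) *ᵥ 1) ⬝ᵥ v = (1 : Fin n → ℝ) ⬝ᵥ ((B ^ (r : ℕ)) *ᵥ v) := by
        rw [← hBsymm r, Matrix.mulVec_transpose, ← Matrix.dotProduct_mulVec, hBsymm r]
      rw [hcol, hsym, hv, Matrix.mulVec_sub, dotProduct_sub]
      have e1 : (B ^ (r : ℕ)) *ᵥ ((B ^ n) *ᵥ (1 : Fin n → ℝ)) = (B ^ ((r : ℕ) + n)) *ᵥ 1 := by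
        rw [Matrix.mulVec_mulVec, ← pow_add]
      have e2 : (1 : Fin n → ℝ) ⬝ᵥ ((B ^ (r : ℕ)) *ᵥ (walkMatrix B *ᵥ c)) =
          ∑ j : Fin n, c j * ((1 : Fin n → ℝ) ⬝ᵥ ((B ^ ((r : ℕ) + (j : ℕ))) *ᵥ 1)) := by
        rw [walkMatrix_mulVec, dot_mulVec_sum]
        congr 1
        funext j
        rw [Matrix.mulVec_mulVec, ← pow_add]
      rw [e1, e2, ← hwalk, hArec]
      have e3 : ∀ j : Fin n, c j * ((1 : Fin n → ℝ) ⬝ᵥ ((A ^ ((r : ℕ) + (j : ℕ))) *ᵥ 1)) =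
          c j * ((1 : Fin n → ℝ) ⬝ᵥ ((B ^ ((r : ℕ) + (j : ℕ))) *ᵥ 1)) := by
        intro j; rw [hwalk]
      rw [Finset.sum_congr rfl (fun j _ => e3 j)]
      simp
    have hVtdet : IsUnit ((walkMatrix B)ᵀ).det :=
      (Matrix.isUnit_iff_isUnit_det _).mp ((Matrix.isUnit_transpose _).mpr hH)
    have hv0 : v = 0 := by
      have e : ((walkMatrix B)ᵀ)⁻¹ *ᵥ ((walkMatrix B)ᵀ *ᵥ v) = v := by
        rw [Matrix.mulVec_mulVec, Matrix.nonsing_inv_mul _ hVtdet, Matrix.one_mulVec]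
      rw [← e, hVt, Matrix.mulVec_zero]
    exact sub_eq_zero.mp hv0
  have hPAn : P *ᵥ ((A ^ n) *ᵥ 1) = (B ^ n) *ᵥ 1 := by
    rw [← hWc, Matrix.mulVec_mulVec, hPW, ← hBn]
  have hstep : ∀ m : ℕ, m ≤ n → P *ᵥ ((A ^ m) *ᵥ 1) = (B ^ m) *ᵥ 1 := by
    intro m hm
    rcases lt_or_eq_of_le hm with hlt | rfl
    · exact h1 ⟨m, hlt⟩
    · exact hPAn
  -- main matrix identity
  have hPAW : P * A * walkMatrix A = B * (P * walkMatrix A) := by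
    have l2 : ∀ j : Fin n, (P * A) *ᵥ ((A ^ (j : ℕ)) *ᵥ (1 : Fin n → ℝ)) =
        (B ^ ((j : ℕ) + 1)) *ᵥ 1 := by
      intro j
      calc (P * A) *ᵥ ((A ^ (j : ℕ)) *ᵥ (1 : Fin n → ℝ))
          = (P * A * A ^ (j : ℕ)) *ᵥ 1 := Matrix.mulVec_mulVec _ _ _
        _ = (P * A ^ ((j : ℕ) + 1)) *ᵥ 1 := by rw [Matrix.mul_assoc, ← pow_succ']
        _ = P *ᵥ ((A ^ ((j : ℕ) + 1)) *ᵥ 1) := (Matrix.mulVec_mulVec _ _ _).symm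
        _ = (B ^ ((j : ℕ) + 1)) *ᵥ 1 := hstep _ (Nat.succ_le_of_lt j.isLt)
    have l3 : ∀ j : Fin n, B *ᵥ ((B ^ (j : ℕ)) *ᵥ (1 : Fin n → ℝ)) =
        (B ^ ((j : ℕ) + 1)) *ᵥ 1 := by
      intro j
      rw [Matrix.mulVec_mulVec, ← pow_succ']
    ext i j
    rw [hPW, mul_walkMatrix_apply, mul_walkMatrix_apply]
    rw [l2 j, l3 j]
  have hPA : P * A = B * P := by
    have h2 : P * A * walkMatrix A * (walkMatrix A)⁻¹ =
        B * (P * walkMatrix A) * (walkMatrix A)⁻¹ := by rw [hPAW]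
    simp only [Matrix.mul_assoc] at h2
    rw [Matrix.mul_nonsing_inv _ hGdet] at h2
    simpa [Matrix.mul_assoc] using h2
  -- P is orthogonal
  have ht : Pᵀ = (σ.symm.toPEquiv.toMatrix : Matrix (Fin n) (Fin n) ℝ) := by
    rw [hPdef, Equiv.Perm.permMatrix, Equiv.toPEquiv_symm, PEquiv.toMatrix_symm]
  have hPPt : P * Pᵀ = 1 := by
    rw [ht, hPdef, Equiv.Perm.permMatrix, ← PEquiv.toMatrix_trans, ← Equiv.toPEquiv_trans]
    simp
  have hmain : P * A * Pᵀ = B := by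
    rw [hPA, Matrix.mul_assoc, hPPt, Matrix.mul_one]
  refine ⟨hmain, ?_⟩
  -- extract the isomorphism
  have hsub : A.submatrix σ σ = B := by
    have hPAmat : P * A = A.submatrix σ id := by
      rw [hPdef, Equiv.Perm.permMatrix, PEquiv.toMatrix_toPEquiv_mul]
    have e : P * A * Pᵀ = A.submatrix σ σ := by
      rw [hPAmat, ht, PEquiv.mul_toMatrix_toPEquiv]
      simp [Matrix.submatrix_submatrix]
    rw [← e, hmain]
  have hadj : ∀ i j, H.Adj i j ↔ G.Adj (σ i) (σ j) := by
    intro i j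
    have e := congrFun (congrFun hsub i) j
    simp only [Matrix.submatrix_apply, hA, hB, SimpleGraph.adjMatrix_apply] at e
    constructor
    · intro h
      by_contra hg
      rw [if_pos h, if_neg hg] at e
      exact zero_ne_one e
    · intro h
      by_contra hg
      rw [if_pos h, if_neg hg] at e
      exact one_ne_zero e
  refine ⟨⟨σ.symm, ?_⟩⟩
  intro a b
  rw [hadj, Equiv.apply_symm_apply, Equiv.apply_symm_apply]
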